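/- Let g be an egalitarian function from the k-slice S of a 3k-set to {W,T,L}, with p_T = P_{x∼U(S)}(g(x)=T) and bias b = P(g=W) − P(g=L). Define E as the weighted sum of inconsistency probabilities E = p_{WWW} + p_{LLL} + p_{WWT}/2 + p_{LLT}/2 + p_{WTT}/6 + p_{LTT}/6 over a uniform ordered partition (x₁,x₂,x₃) of V into three k-sets. Then E ≥ ((1−p_T)(5−3p_T) + 27b²)/32. -/

import Mathlib

/-- Election result symbols: Win, Tie, Loss. -/
inductive WTL | W | T | L
deriving DecidableEq

open WTL

variable {α : Type*} [DecidableEq α]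

/-- The `k`-slice of `V`. -/
def kslice (V : Finset α) (k : ℕ) : Finset (Finset α) :=
  V.powerset.filter (fun x => x.card = k)

/-- Ordered partitions of `V` into three parts of sizes `a`, `b`, `c`. -/
def triples (V : Finset α) (a b c : ℕ) : Finset (Finset α × Finset α × Finset α) :=
  (V.powerset ×ˢ V.powerset ×ˢ V.powerset).filter
    (fun p => p.1.card = a ∧ p.2.1.card = b ∧ p.2.2.card = c ∧
      Disjoint p.1 p.2.1 ∧ Disjoint p.1 p.2.2 ∧ Disjoint p.2.1 p.2.2 ∧
      p.1 ∪ p.2.1 ∪ p.2.2 = V)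

/-- An egalitarian `{W,T,L}`-valued function on the `k`-slice: for each value `X`,
the conditional probability that `g(x) = X` given `i ∈ x` is independent of `i ∈ V`. -/
def EgalitarianWTL (V : Finset α) (k : ℕ) (g : Finset α → WTL) : Prop :=
  ∀ X : WTL, ∀ i ∈ V, ∀ j ∈ V,
    ((kslice V k).filter (fun x => i ∈ x ∧ g x = X)).card
      = ((kslice V k).filter (fun x => j ∈ x ∧ g x = X)).card


open Finset

set_option linter.unusedSectionVars false
set_option maxHeartbeats 1000000

lemma mem_kslice {V x : Finset α} {k : ℕ} : x ∈ kslice V k ↔ x ⊆ V ∧ x.card = k := by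
  simp [kslice, Finset.mem_filter, Finset.mem_powerset]

lemma kslice_eq_powersetCard (V : Finset α) (k : ℕ) : kslice V k = V.powersetCard k := by
  ext x; simp [mem_kslice, Finset.mem_powersetCard]

lemma card_kslice (V : Finset α) (k : ℕ) : (kslice V k).card = (V.card).choose k := by
  rw [kslice_eq_powersetCard, Finset.card_powersetCard]

set_option linter.unusedSectionVars false

lemma count_disj_sup {k : ℕ} {V x R : Finset α} (hV : V.card = 3*k)
    (hx : x ∈ kslice V k) (hR : R ⊆ V) (hRx : Disjoint R x) (hRk : R.card ≤ k) :
    (((kslice V k).filter (fun y => Disjoint x y ∧ R ⊆ y)).card)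
      = (2*k - R.card).choose (k - R.card) := by
  obtain ⟨hxV, hxc⟩ := mem_kslice.mp hx
  have hRVx : R ⊆ (V \ x) := fun a ha => Finset.mem_sdiff.mpr ⟨hR ha, fun hax => 
    (Finset.disjoint_left.mp hRx ha) hax⟩
  have hcard : ((V \ x) \ R).card = 2*k - R.card := by
    rw [Finset.card_sdiff_of_subset hRVx, Finset.card_sdiff_of_subset hxV, hV, hxc]
    omega
  rw [← hcard, ← Finset.card_powersetCard]
  · apply Finset.card_bij' (fun y _ => y \ R) (fun z _ => z ∪ R)
    · intro y hy
      simp only [Finset.mem_filter, mem_kslice] at hy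
      obtain ⟨⟨hyV, hyc⟩, hdisj, hRy⟩ := hy
      rw [Finset.mem_powersetCard]
      constructor
      · intro a ha
        rw [Finset.mem_sdiff] at ha ⊢
        exact ⟨Finset.mem_sdiff.mpr ⟨hyV ha.1, fun hax => (Finset.disjoint_right.mp hdisj ha.1) hax⟩, ha.2⟩
      · rw [Finset.card_sdiff_of_subset hRy, hyc]
    · intro z hz
      rw [Finset.mem_powersetCard] at hz
      obtain ⟨hzsub, hzc⟩ := hz
      have hzV : z ⊆ V \ x := hzsub.trans (Finset.sdiff_subset)
      have hzR : Disjoint z R := Finset.disjoint_left.mpr (fun a ha => (Finset.mem_sdiff.mp (hzsub ha)).2)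
      simp only [Finset.mem_filter, mem_kslice]
      refine ⟨⟨Finset.union_subset (hzV.trans Finset.sdiff_subset) hR, ?_⟩, ?_, Finset.subset_union_right⟩
      · rw [Finset.card_union_of_disjoint hzR, hzc]
        omega
      · rw [Finset.disjoint_union_right]
        exact ⟨Finset.disjoint_right.mpr (fun a haz => (Finset.mem_sdiff.mp (hzV haz)).2), hRx.symm⟩
    · intro y hy
      simp only [Finset.mem_filter] at hy
      exact Finset.sdiff_union_of_subset hy.2.2
    · intro z hz
      rw [Finset.mem_powersetCard] at hz
      have hzR : Disjoint z R := Finset.disjoint_left.mpr (fun a ha => (Finset.mem_sdiff.mp (hz.1 ha)).2)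
      exact Finset.union_sdiff_cancel_right hzR
lemma count_disj_sup' {k : ℕ} {V x R : Finset α} (hx : x ∈ kslice V k) (hRx : ¬ Disjoint R x) :
    (((kslice V k).filter (fun y => Disjoint x y ∧ R ⊆ y)).card) = 0 := by
  rw [Finset.card_eq_zero, Finset.filter_eq_empty_iff]
  intro y _
  rintro ⟨hdisj, hRy⟩
  apply hRx
  exact Finset.disjoint_left.mpr (fun a haR hax => Finset.disjoint_left.mp hdisj hax (hRy haR))

lemma count_disj {k : ℕ} {V x : Finset α} (hV : V.card = 3*k) (hx : x ∈ kslice V k) :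
    (((kslice V k).filter (fun y => Disjoint x y)).card) = (2*k).choose k := by
  have h := count_disj_sup (R := ∅) hV hx (Finset.empty_subset V) (Finset.disjoint_left.mpr (by simp)) (by simp)
  simpa using h

/-- double counting over elements -/
lemma sum_elem_filter {M : Type*} [AddCommMonoid M] {k : ℕ} {V : Finset α} (f : Finset α → M) :
    ∑ i ∈ V, ∑ x ∈ (kslice V k).filter (fun x => i ∈ x), f x = k • ∑ x ∈ kslice V k, f x := by
  simp_rw [Finset.sum_filter]
  rw [Finset.sum_comm, Finset.smul_sum]
  apply Finset.sum_congr rfl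
  intro x hx
  obtain ⟨hxV, hxc⟩ := mem_kslice.mp hx
  rw [Finset.sum_ite_mem]
  rw [Finset.inter_eq_right.mpr hxV, Finset.sum_const, hxc]
lemma mem_triples {k : ℕ} {V : Finset α} {q : Finset α × Finset α × Finset α} :
    q ∈ triples V k k k ↔ q.1.card = k ∧ q.2.1.card = k ∧ q.2.2.card = k ∧
      Disjoint q.1 q.2.1 ∧ Disjoint q.1 q.2.2 ∧ Disjoint q.2.1 q.2.2 ∧
      q.1 ∪ q.2.1 ∪ q.2.2 = V := by
  constructor
  · intro h
    exact (Finset.mem_filter.mp h).2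
  · intro h
    refine Finset.mem_filter.mpr ⟨?_, h⟩
    obtain ⟨-, -, -, -, -, -, hu⟩ := h
    simp only [Finset.mem_product, Finset.mem_powerset]
    subst hu
    refine ⟨?_, ?_, ?_⟩ <;> intro a ha <;> simp [Finset.mem_union, ha]

section TriplePair

variable {M : Type*} [AddCommMonoid M]

private lemma pair_mem_aux {k : ℕ} {V x y : Finset α} (hV : V.card = 3*k)
    (hx : x ∈ kslice V k) (hy : y ∈ kslice V k) (hd : Disjoint x y) :
    (V \ (x ∪ y)) ∈ kslice V k ∧ Disjoint x (V \ (x ∪ y)) ∧ Disjoint y (V \ (x ∪ y))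
      ∧ x ∪ y ∪ (V \ (x ∪ y)) = V := by
  obtain ⟨hxV, hxc⟩ := mem_kslice.mp hx
  obtain ⟨hyV, hyc⟩ := mem_kslice.mp hy
  have hsub : x ∪ y ⊆ V := Finset.union_subset hxV hyV
  have hcard : (x ∪ y).card = 2*k := by
    rw [Finset.card_union_of_disjoint hd, hxc, hyc]; omega
  refine ⟨mem_kslice.mpr ⟨Finset.sdiff_subset, ?_⟩, ?_, ?_, ?_⟩
  · rw [Finset.card_sdiff_of_subset hsub, hV, hcard]; omega
  · exact Finset.disjoint_sdiff.mono_left Finset.subset_union_left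
  · exact Finset.disjoint_sdiff.mono_left Finset.subset_union_right
  · exact Finset.union_sdiff_of_subset hsub

private lemma third_eq {k : ℕ} {V : Finset α} {q : Finset α × Finset α × Finset α}
    (hq : q ∈ triples V k k k) : q.2.2 = V \ (q.1 ∪ q.2.1) := by
  obtain ⟨-, -, -, h12, h13, h23, hu⟩ := mem_triples.mp hq
  rw [← hu, Finset.union_sdiff_cancel_left (by rw [Finset.disjoint_union_left]; exact ⟨h13, h23⟩)]

private lemma second_eq {k : ℕ} {V : Finset α} {q : Finset α × Finset α × Finset α}
    (hq : q ∈ triples V k k k) : q.2.1 = V \ (q.1 ∪ q.2.2) := by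
  obtain ⟨-, -, -, h12, h13, h23, hu⟩ := mem_triples.mp hq
  have : q.1 ∪ q.2.2 ∪ q.2.1 = V := by rw [← hu]; ac_rfl
  rw [← this, Finset.union_sdiff_cancel_left (by rw [Finset.disjoint_union_left]; exact ⟨h12, h23.symm⟩)]

private lemma first_eq {k : ℕ} {V : Finset α} {q : Finset α × Finset α × Finset α}
    (hq : q ∈ triples V k k k) : q.1 = V \ (q.2.1 ∪ q.2.2) := by
  obtain ⟨-, -, -, h12, h13, h23, hu⟩ := mem_triples.mp hq
  have : q.2.1 ∪ q.2.2 ∪ q.1 = V := by rw [← hu]; ac_rfl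
  rw [← this, Finset.union_sdiff_cancel_left (by rw [Finset.disjoint_union_left]; exact ⟨h12.symm, h13.symm⟩)]

private lemma pair_sum_expand {k : ℕ} {V : Finset α} (F : Finset α → Finset α → M) :
    ∑ p ∈ ((kslice V k) ×ˢ (kslice V k)).filter (fun p => Disjoint p.1 p.2), F p.1 p.2
      = ∑ x ∈ kslice V k, ∑ y ∈ (kslice V k).filter (fun y => Disjoint x y), F x y := by
  rw [Finset.sum_filter, Finset.sum_product]
  simp_rw [Finset.sum_filter]

lemma sum_tr12 {k : ℕ} {V : Finset α} (hV : V.card = 3*k) (F : Finset α → Finset α → M) :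
    ∑ q ∈ triples V k k k, F q.1 q.2.1
      = ∑ x ∈ kslice V k, ∑ y ∈ (kslice V k).filter (fun y => Disjoint x y), F x y := by
  rw [← pair_sum_expand]
  apply Finset.sum_nbij' (fun q => (q.1, q.2.1)) (fun p => (p.1, p.2, V \ (p.1 ∪ p.2)))
  · intro q hq
    obtain ⟨h1, h2, h3, h12, h13, h23, hu⟩ := mem_triples.mp hq
    refine Finset.mem_filter.mpr ⟨Finset.mem_product.mpr ⟨?_, ?_⟩, h12⟩
    · exact mem_kslice.mpr ⟨by rw [← hu]; intro a ha; simp [ha], h1⟩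
    · exact mem_kslice.mpr ⟨by rw [← hu]; intro a ha; simp [ha], h2⟩
  · intro p hp
    obtain ⟨hmem, hd⟩ := Finset.mem_filter.mp hp
    obtain ⟨hx, hy⟩ := Finset.mem_product.mp hmem
    obtain ⟨hz, d1, d2, hu⟩ := pair_mem_aux hV hx hy hd
    exact mem_triples.mpr ⟨(mem_kslice.mp hx).2, (mem_kslice.mp hy).2, (mem_kslice.mp hz).2,
      hd, d1, d2, by dsimp only; exact hu⟩
  · intro q hq
    exact Prod.ext rfl (Prod.ext rfl (third_eq hq).symm)
  · intro p hp
    rfl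
  · intro q hq
    rfl

lemma sum_tr13 {k : ℕ} {V : Finset α} (hV : V.card = 3*k) (F : Finset α → Finset α → M) :
    ∑ q ∈ triples V k k k, F q.1 q.2.2
      = ∑ x ∈ kslice V k, ∑ y ∈ (kslice V k).filter (fun y => Disjoint x y), F x y := by
  rw [← pair_sum_expand]
  apply Finset.sum_nbij' (fun q => (q.1, q.2.2)) (fun p => (p.1, V \ (p.1 ∪ p.2), p.2))
  · intro q hq
    obtain ⟨h1, h2, h3, h12, h13, h23, hu⟩ := mem_triples.mp hq
    refine Finset.mem_filter.mpr ⟨Finset.mem_product.mpr ⟨?_, ?_⟩, h13⟩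
    · exact mem_kslice.mpr ⟨by rw [← hu]; intro a ha; simp [ha], h1⟩
    · exact mem_kslice.mpr ⟨by rw [← hu]; intro a ha; simp [ha], h3⟩
  · intro p hp
    obtain ⟨hmem, hd⟩ := Finset.mem_filter.mp hp
    obtain ⟨hx, hy⟩ := Finset.mem_product.mp hmem
    obtain ⟨hz, d1, d2, hu⟩ := pair_mem_aux hV hx hy hd
    refine mem_triples.mpr ⟨(mem_kslice.mp hx).2, (mem_kslice.mp hz).2, (mem_kslice.mp hy).2,
      d1, hd, d2.symm, ?_⟩
    dsimp only; conv_rhs => rw [← hu]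
    ac_rfl
  · intro q hq
    exact Prod.ext rfl (Prod.ext (second_eq hq).symm rfl)
  · intro p hp
    rfl
  · intro q hq
    rfl

lemma sum_tr23 {k : ℕ} {V : Finset α} (hV : V.card = 3*k) (F : Finset α → Finset α → M) :
    ∑ q ∈ triples V k k k, F q.2.1 q.2.2
      = ∑ x ∈ kslice V k, ∑ y ∈ (kslice V k).filter (fun y => Disjoint x y), F x y := by
  rw [← pair_sum_expand]
  apply Finset.sum_nbij' (fun q => (q.2.1, q.2.2)) (fun p => (V \ (p.1 ∪ p.2), p.1, p.2))
  · intro q hq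
    obtain ⟨h1, h2, h3, h12, h13, h23, hu⟩ := mem_triples.mp hq
    refine Finset.mem_filter.mpr ⟨Finset.mem_product.mpr ⟨?_, ?_⟩, h23⟩
    · exact mem_kslice.mpr ⟨by rw [← hu]; intro a ha; simp [ha], h2⟩
    · exact mem_kslice.mpr ⟨by rw [← hu]; intro a ha; simp [ha], h3⟩
  · intro p hp
    obtain ⟨hmem, hd⟩ := Finset.mem_filter.mp hp
    obtain ⟨hx, hy⟩ := Finset.mem_product.mp hmem
    obtain ⟨hz, d1, d2, hu⟩ := pair_mem_aux hV hx hy hd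
    refine mem_triples.mpr ⟨(mem_kslice.mp hz).2, (mem_kslice.mp hx).2, (mem_kslice.mp hy).2,
      d1.symm, d2.symm, hd, ?_⟩
    dsimp only; conv_rhs => rw [← hu]
    ac_rfl
  · intro q hq
    exact Prod.ext (first_eq hq).symm rfl
  · intro p hp
    rfl
  · intro q hq
    rfl

lemma sum_pair_swap {k : ℕ} {V : Finset α} (F : Finset α → Finset α → M) :
    ∑ x ∈ kslice V k, ∑ y ∈ (kslice V k).filter (fun y => Disjoint x y), F x y
      = ∑ y ∈ kslice V k, ∑ x ∈ (kslice V k).filter (fun x => Disjoint x y), F x y := by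
  simp_rw [Finset.sum_filter]
  exact Finset.sum_comm

end TriplePair
section Spectral

variable (k : ℕ) (V : Finset α)

/-- point-evaluation space -/
abbrev SliceSpace := EuclideanSpace ℝ {x // x ∈ kslice V k}

noncomputable def eVec (R : Finset α) : SliceSpace k V :=
  WithLp.toLp 2 (fun x => if R ⊆ (x : Finset α) then 1 else 0)

noncomputable def Vle (d : ℕ) : Submodule ℝ (SliceSpace k V) :=
  Submodule.span ℝ ((fun R => eVec k V R) '' {R : Finset α | R ⊆ V ∧ R.card ≤ d})

noncomputable def Tdis : SliceSpace k V →ₗ[ℝ] SliceSpace k V where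
  toFun u := WithLp.toLp 2 (fun x => ∑ y : {x // x ∈ kslice V k},
    if Disjoint (x : Finset α) (y : Finset α) then u y else 0)
  map_add' u v := by
    ext x
    show (∑ y : {x // x ∈ kslice V k}, (_ : ℝ)) = (∑ y : {x // x ∈ kslice V k}, (_ : ℝ)) + (∑ y : {x // x ∈ kslice V k}, (_ : ℝ))
    rw [← Finset.sum_add_distrib]
    exact Finset.sum_congr rfl fun y _ => by split <;> simp <;> rfl
  map_smul' c u := by
    ext x
    show (∑ y : {x // x ∈ kslice V k}, (_ : ℝ)) = c • (∑ y : {x // x ∈ kslice V k}, (_ : ℝ))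
    rw [Finset.smul_sum]
    exact Finset.sum_congr rfl fun y _ => by split <;> simp <;> rfl

noncomputable def toSlice (f : Finset α → ℝ) : SliceSpace k V := WithLp.toLp 2 (fun x => f (x : Finset α))

variable {k V}

lemma inner_expand (u v : SliceSpace k V) :
    (inner ℝ u v : ℝ) = ∑ x : {x // x ∈ kslice V k}, u x * v x := by
  simp [PiLp.inner_apply, RCLike.inner_apply, conj_trivial, mul_comm]

lemma sliceSum_apply {β : Type*} (s : Finset β) (F : β → SliceSpace k V)
    (y : {x // x ∈ kslice V k}) : (∑ x ∈ s, F x) y = ∑ x ∈ s, F x y := by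
  induction s using Finset.cons_induction with
  | empty => rfl
  | cons a s ha ih => rw [Finset.sum_cons, Finset.sum_cons, ← ih]; rfl

lemma incl_excl (R x : Finset α) :
    ∑ R' ∈ R.powerset, ((-1:ℝ))^R'.card * (if R' ⊆ x then 1 else 0)
      = if Disjoint R x then 1 else 0 := by
  have h1 : R.powerset.filter (fun R' => R' ⊆ x) = (R ∩ x).powerset := by
    ext R'
    rw [Finset.mem_filter, Finset.mem_powerset, Finset.mem_powerset, Finset.subset_inter_iff]
  calc ∑ R' ∈ R.powerset, ((-1:ℝ))^R'.card * (if R' ⊆ x then 1 else 0)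
      = ∑ R' ∈ R.powerset.filter (fun R' => R' ⊆ x), ((-1:ℝ))^R'.card := by
        rw [Finset.sum_filter]
        exact Finset.sum_congr rfl fun R' _ => by split <;> simp
    _ = ∑ R' ∈ (R ∩ x).powerset, ((-1:ℝ))^R'.card := by rw [h1]
    _ = (((∑ R' ∈ (R ∩ x).powerset, ((-1:ℤ))^R'.card) : ℤ) : ℝ) := by push_cast; rfl
    _ = if Disjoint R x then 1 else 0 := by
        rw [Finset.sum_powerset_neg_one_pow_card]
        by_cases hd : Disjoint R x
        · simp [hd, Finset.disjoint_iff_inter_eq_empty.mp hd]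
        · have hne : ¬ R ∩ x = ∅ := fun h => hd (Finset.disjoint_iff_inter_eq_empty.mpr h)
          simp [hd, hne]
lemma Tdis_apply (u : SliceSpace k V) (x : {x // x ∈ kslice V k}) :
    Tdis k V u x = ∑ y : {x // x ∈ kslice V k},
      if Disjoint (x : Finset α) (y : Finset α) then u y else 0 := rfl

lemma Tdis_eVec (hV : V.card = 3*k) {R : Finset α} (hR : R ⊆ V) (hRk : R.card ≤ k) :
    Tdis k V (eVec k V R) = (((2*k - R.card).choose (k - R.card) : ℝ)) •
      ∑ R' ∈ R.powerset, ((-1:ℝ))^R'.card • eVec k V R' := by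
  ext x
  have lhs_eq : Tdis k V (eVec k V R) x
      = (((kslice V k).filter (fun y => Disjoint (x:Finset α) y ∧ R ⊆ y)).card : ℝ) := by
    rw [Tdis_apply, ← Finset.sum_boole, ← Finset.sum_coe_sort (kslice V k)
        (fun y => if Disjoint (x:Finset α) y ∧ R ⊆ y then (1:ℝ) else 0)]
    apply Finset.sum_congr rfl
    intro y _
    unfold eVec
    by_cases h1 : Disjoint (x:Finset α) (y:Finset α) <;> by_cases h2 : R ⊆ (y:Finset α) <;>
      simp [h1, h2]
  have rhs_eq : ((((2*k - R.card).choose (k - R.card) : ℝ)) •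
      ∑ R' ∈ R.powerset, ((-1:ℝ))^R'.card • eVec k V R') x
      = ((2*k - R.card).choose (k - R.card) : ℝ) * (if Disjoint R (x:Finset α) then 1 else 0) := by
    show ((2*k - R.card).choose (k - R.card) : ℝ)
        * ((∑ R' ∈ R.powerset, ((-1:ℝ))^R'.card • eVec k V R') x) = _
    rw [sliceSum_apply]
    congr 1
    rw [← incl_excl R (x:Finset α)]
    apply Finset.sum_congr rfl
    intro R' _
    rfl
  rw [lhs_eq, rhs_eq]
  by_cases hd : Disjoint R (x:Finset α)
  · rw [count_disj_sup hV x.2 hR hd hRk]; simp [hd]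
  · rw [count_disj_sup' x.2 hd]; simp [hd]

lemma Tdis_symm (u v : SliceSpace k V) :
    (inner ℝ (Tdis k V u) v : ℝ) = inner ℝ u (Tdis k V v) := by
  rw [inner_expand, inner_expand]
  simp_rw [Tdis_apply, Finset.sum_mul, Finset.mul_sum]
  rw [Finset.sum_comm]
  apply Finset.sum_congr rfl; intro y _; apply Finset.sum_congr rfl; intro x _
  by_cases h : Disjoint (x:Finset α) (y:Finset α)
  · simp [h, h.symm, mul_comm]
  · have h' : ¬ Disjoint (y:Finset α) (x:Finset α) := fun hh => h hh.symm
    simp [h, h']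

lemma eVec_mem {R : Finset α} {d : ℕ} (hR : R ⊆ V) (hc : R.card ≤ d) :
    eVec k V R ∈ Vle k V d :=
  Submodule.subset_span ⟨R, ⟨hR, hc⟩, rfl⟩

lemma Vle_mono {d d' : ℕ} (h : d ≤ d') : Vle k V d ≤ Vle k V d' :=
  Submodule.span_mono (Set.image_mono fun R hR => ⟨hR.1, hR.2.trans h⟩)

noncomputable def lam (k d : ℕ) : ℝ := (-1)^d * ((2*k - d).choose (k - d) : ℝ)

lemma Tdis_shift (hV : V.card = 3*k) {d : ℕ} (hdk : d ≤ k) :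
    ∀ v ∈ Vle k V d, Tdis k V v - lam k d • v ∈ Vle k V (d-1) := by
  intro v hv
  induction hv using Submodule.span_induction with
  | mem x hx =>
    obtain ⟨R, ⟨hR, hc⟩, rfl⟩ := hx
    rw [Tdis_eVec hV hR (hc.trans hdk)]
    have hsum : ∀ c : ℝ, c • ∑ R' ∈ R.powerset.erase R, ((-1:ℝ))^R'.card • eVec k V R'
        ∈ Vle k V (d-1) := by
      intro c
      apply Submodule.smul_mem
      apply Submodule.sum_mem
      intro R' hR'
      obtain ⟨hne, hmem⟩ := Finset.mem_erase.mp hR'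
      have hsub : R' ⊆ R := Finset.mem_powerset.mp hmem
      have hlt : R'.card < R.card := Finset.card_lt_card ⟨hsub, fun h => hne (Finset.Subset.antisymm hsub h)⟩
      exact Submodule.smul_mem _ _ (eVec_mem (hsub.trans hR) (by omega))
    have hsplit : ∑ R' ∈ R.powerset, ((-1:ℝ))^R'.card • eVec k V R'
        = ((-1:ℝ))^R.card • eVec k V R
          + ∑ R' ∈ R.powerset.erase R, ((-1:ℝ))^R'.card • eVec k V R' :=
      (Finset.add_sum_erase R.powerset (fun R' => ((-1:ℝ))^R'.card • eVec k V R')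
        (Finset.mem_powerset_self R)).symm
    by_cases hrd : R.card = d
    · have hcoef : lam k d = ((2*k - R.card).choose (k - R.card) : ℝ) * ((-1:ℝ))^R.card := by
        rw [lam, hrd]; ring
      have key : (((2*k - R.card).choose (k - R.card) : ℝ)) • (((-1:ℝ))^R.card • eVec k V R
            + ∑ R' ∈ R.powerset.erase R, ((-1:ℝ))^R'.card • eVec k V R')
          - lam k d • eVec k V R
          = (((2*k - R.card).choose (k - R.card) : ℝ)) •
            ∑ R' ∈ R.powerset.erase R, ((-1:ℝ))^R'.card • eVec k V R' := by
        rw [hcoef]; module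
      rw [hsplit, key]
      exact hsum _
    · have hRd : R.card ≤ d - 1 := by omega
      rw [hsplit]
      apply Submodule.sub_mem
      · rw [smul_add]
        apply Submodule.add_mem
        · exact Submodule.smul_mem _ _ (Submodule.smul_mem _ _ (eVec_mem hR hRd))
        · exact hsum _
      · exact Submodule.smul_mem _ _ (eVec_mem hR hRd)
  | zero => simp
  | add x y hx hy ihx ihy =>
    have : Tdis k V (x + y) - lam k d • (x + y)
        = (Tdis k V x - lam k d • x) + (Tdis k V y - lam k d • y) := by
      rw [map_add]; module
    rw [this]; exact Submodule.add_mem _ ihx ihy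
  | smul c x hx ihx =>
    have : Tdis k V (c • x) - lam k d • (c • x) = c • (Tdis k V x - lam k d • x) := by
      rw [map_smul]; module
    rw [this]; exact Submodule.smul_mem _ _ ihx

lemma Tdis_mem (hV : V.card = 3*k) {d : ℕ} (hdk : d ≤ k) {v : SliceSpace k V}
    (hv : v ∈ Vle k V d) : Tdis k V v ∈ Vle k V d := by
  have h := Tdis_shift hV hdk v hv
  have heq : Tdis k V v = (Tdis k V v - lam k d • v) + lam k d • v := by module
  rw [heq]
  exact Submodule.add_mem _ (Vle_mono (Nat.sub_le d 1) h) (Submodule.smul_mem _ _ hv)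

lemma mem_Vle_top (u : SliceSpace k V) : u ∈ Vle k V k := by
  have hueq : u = ∑ x : {x // x ∈ kslice V k}, u x • eVec k V (x : Finset α) := by
    ext y
    rw [sliceSum_apply]
    have hterm : ∀ x : {x // x ∈ kslice V k},
        (u x • eVec k V (x:Finset α)) y = if x = y then u x else 0 := by
      intro x
      show u x * (if (x:Finset α) ⊆ (y:Finset α) then (1:ℝ) else 0) = _
      by_cases h : x = y
      · subst h; simp
      · have hns : ¬ (x:Finset α) ⊆ (y:Finset α) := by
          intro hsub
          exact h (Subtype.ext (Finset.eq_of_subset_of_card_le hsub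
            (by rw [(mem_kslice.mp x.2).2, (mem_kslice.mp y.2).2])))
        simp [h, hns]
    simp_rw [hterm]
    rw [Finset.sum_ite_eq' Finset.univ y (fun x => u x)]
    simp
  rw [hueq]
  exact Submodule.sum_mem _ (fun x _ => Submodule.smul_mem _ _
    (eVec_mem (mem_kslice.mp x.2).1 (le_of_eq (mem_kslice.mp x.2).2)))

lemma perp_Vle1 (f : Finset α → ℝ) (h0 : ∑ x ∈ kslice V k, f x = 0)
    (h1 : ∀ i ∈ V, ∑ x ∈ (kslice V k).filter (fun x => i ∈ x), f x = 0) :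
    ∀ v ∈ Vle k V 1, (inner ℝ (toSlice k V f) v : ℝ) = 0 := by
  intro v hv
  induction hv using Submodule.span_induction with
  | mem x hx =>
    obtain ⟨R, ⟨hR, hc⟩, rfl⟩ := hx
    have hexp : (inner ℝ (toSlice k V f) (eVec k V R) : ℝ)
        = ∑ x ∈ (kslice V k).filter (fun x => R ⊆ x), f x := by
      rw [inner_expand, Finset.sum_filter, ← Finset.sum_coe_sort (kslice V k)
        (fun x => if R ⊆ x then f x else 0)]
      apply Finset.sum_congr rfl
      intro x _
      show f (x:Finset α) * (if R ⊆ (x:Finset α) then (1:ℝ) else 0) = _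
      split <;> simp
    rw [hexp]
    interval_cases hcard : R.card
    · have : R = ∅ := Finset.card_eq_zero.mp hcard
      subst this
      rw [Finset.filter_true_of_mem (fun _ _ => Finset.empty_subset _)]
      exact h0
    · obtain ⟨i, rfl⟩ := Finset.card_eq_one.mp hcard
      have : ∀ x : Finset α, ({i} ⊆ x) = (i ∈ x) := by
        intro x; simp [Finset.singleton_subset_iff]
      simp_rw [Finset.singleton_subset_iff]
      exact h1 i (hR (Finset.mem_singleton_self i))
  | zero => simp
  | add x y hx hy ihx ihy => rw [inner_add_right, ihx, ihy]; ring
  | smul c x hx ihx => rw [inner_smul_right, ihx]; simp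
lemma choose_step {k m : ℕ} (h : m + 1 ≤ k) :
    2 * Nat.choose (k + m) m ≤ Nat.choose (k + m + 1) (m + 1) := by
  have h1 : (k + m + 1) * Nat.choose (k + m) m = Nat.choose (k + m + 1) (m + 1) * (m + 1) :=
    Nat.add_one_mul_choose_eq (k + m) m
  have h2 : 2 * Nat.choose (k+m) m * (m+1) ≤ Nat.choose (k+m+1) (m+1) * (m+1) := by
    calc 2 * Nat.choose (k+m) m * (m+1) = (2*(m+1)) * Nat.choose (k+m) m := by ring
    _ ≤ (k+m+1) * Nat.choose (k+m) m := Nat.mul_le_mul_right _ (by omega)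
    _ = Nat.choose (k+m+1) (m+1) * (m+1) := h1
  exact Nat.le_of_mul_le_mul_right h2 (Nat.succ_pos m)

lemma choose_chain (k : ℕ) : ∀ j m, k = m + j → Nat.choose (k + m) m * 2^j ≤ Nat.choose (2*k) k := by
  intro j
  induction j with
  | zero =>
    intro m h
    have : m = k := by omega
    subst this
    rw [show m + m = 2 * m by ring, pow_zero, mul_one]
  | succ j ih =>
    intro m h
    have h1 : m + 1 ≤ k := by omega
    calc Nat.choose (k+m) m * 2^(j+1) = (2 * Nat.choose (k+m) m) * 2^j := by ring
    _ ≤ Nat.choose (k+m+1) (m+1) * 2^j := Nat.mul_le_mul_right _ (choose_step h1)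
    _ ≤ Nat.choose (2*k) k := by
        have := ih (m+1) (by omega)
        rwa [show k+(m+1) = k+m+1 by omega] at this

lemma eight_choose_le {k d : ℕ} (h3 : 3 ≤ d) (hdk : d ≤ k) :
    8 * Nat.choose (2*k - d) (k - d) ≤ Nat.choose (2*k) k := by
  have h := choose_chain k d (k - d) (by omega)
  rw [show k + (k - d) = 2*k - d by omega] at h
  calc 8 * Nat.choose (2*k-d) (k-d) = Nat.choose (2*k-d) (k-d) * 2^3 := by ring
  _ ≤ Nat.choose (2*k-d) (k-d) * 2^d := by
      apply Nat.mul_le_mul_left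
      exact Nat.pow_le_pow_right (by omega) h3
  _ ≤ Nat.choose (2*k) k := h

lemma lam_bound {k d : ℕ} (h2 : 2 ≤ d) (hdk : d ≤ k) :
    lam k d ≥ -(((2*k).choose k : ℝ)/8) := by
  rcases Nat.even_or_odd d with he | ho
  · rw [lam, he.neg_one_pow, one_mul]
    have h1 : (0:ℝ) ≤ ((2*k - d).choose (k - d) : ℝ) := Nat.cast_nonneg _
    have h2 : (0:ℝ) ≤ (((2*k).choose k : ℝ)/8) := by positivity
    linarith
  · rw [lam, ho.neg_one_pow]
    have h3 : 3 ≤ d := by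
      rcases ho with ⟨m, rfl⟩; omega
    have h := eight_choose_le h3 hdk
    have hcast : (8:ℝ) * ((2*k - d).choose (k - d) : ℝ) ≤ ((2*k).choose k : ℝ) := by
      exact_mod_cast h
    linarith

lemma main_ind (hV : V.card = 3*k) :
    ∀ d, d ≤ k → ∀ u : SliceSpace k V, u ∈ Vle k V d →
    (∀ v ∈ Vle k V 1, (inner ℝ u v : ℝ) = 0) →
    (inner ℝ u (Tdis k V u) : ℝ) ≥ -(((2*k).choose k : ℝ)/8) * (inner ℝ u u : ℝ) := by
  intro d
  induction d with
  | zero =>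
    intro _ u hu hperp
    have hu0 : u = 0 := inner_self_eq_zero.mp (hperp u (Vle_mono (by omega) hu))
    rw [hu0]
    simp
  | succ d ih =>
    intro hdk u hu hperp
    by_cases hd1 : d + 1 ≤ 1
    · have hu0 : u = 0 := inner_self_eq_zero.mp (hperp u (Vle_mono (by omega) hu))
      rw [hu0]
      simp
    · obtain ⟨v0, hv0, w, hw, huvw⟩ := Submodule.exists_add_mem_mem_orthogonal (K := Vle k V d) u
      have hwle : w ∈ Vle k V (d+1) := by
        have hweq : w = u - v0 := by rw [huvw]; abel
        rw [hweq]
        exact Submodule.sub_mem _ hu (Vle_mono (by omega) hv0)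
      have hwperp : ∀ v ∈ Vle k V d, (inner ℝ w v : ℝ) = 0 := by
        intro v hv
        have := (Submodule.mem_orthogonal _ w).mp hw v hv
        rwa [real_inner_comm] at this
      have hTw : Tdis k V w = lam k (d+1) • w := by
        have hz1 : Tdis k V w - lam k (d+1) • w ∈ Vle k V d := by
          have := Tdis_shift hV hdk w hwle
          simpa using this
        have hz2 : (inner ℝ (Tdis k V w - lam k (d+1) • w) (Tdis k V w - lam k (d+1) • w) : ℝ)
            = 0 := by
          set z := Tdis k V w - lam k (d+1) • w with hzdef
          have hzperp : (inner ℝ z z : ℝ) = inner ℝ z (Tdis k V w) - lam k (d+1) * inner ℝ z w := by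
            rw [hzdef, inner_sub_right, real_inner_smul_right]
          have e1 : (inner ℝ z (Tdis k V w) : ℝ) = 0 := by
            rw [← Tdis_symm]
            have hTz : Tdis k V z ∈ Vle k V d := Tdis_mem hV (by omega) hz1
            rw [real_inner_comm]
            exact hwperp _ hTz
          have e2 : (inner ℝ z w : ℝ) = 0 := by
            rw [real_inner_comm]
            exact hwperp _ hz1
          rw [hzperp, e1, e2]
          ring
        have := inner_self_eq_zero.mp hz2
        have h := sub_eq_zero.mp this
        exact h
      have hv0perp : ∀ v ∈ Vle k V 1, (inner ℝ v0 v : ℝ) = 0 := by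
        intro v hv
        have h1 := hperp v hv
        have h2 : (inner ℝ w v : ℝ) = 0 := hwperp v (Vle_mono (by omega) hv)
        rw [huvw, inner_add_left] at h1
        linarith
      have hIH := ih (by omega) v0 hv0 hv0perp
      have hcross1 : (inner ℝ v0 w : ℝ) = 0 := (Submodule.mem_orthogonal _ w).mp hw v0 hv0
      have hcross1' : (inner ℝ w v0 : ℝ) = 0 := by rw [real_inner_comm]; exact hcross1
      have hTv0 : Tdis k V v0 ∈ Vle k V d := Tdis_mem hV (by omega) hv0
      have hcross2 : (inner ℝ w (Tdis k V v0) : ℝ) = 0 := hwperp _ hTv0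
      have hlam := lam_bound (k := k) (d := d+1) (by omega) hdk
      have hww : (0:ℝ) ≤ inner ℝ w w := real_inner_self_nonneg
      have hvv : (0:ℝ) ≤ inner ℝ v0 v0 := real_inner_self_nonneg
      have hexp1 : (inner ℝ u (Tdis k V u) : ℝ)
          = inner ℝ v0 (Tdis k V v0) + lam k (d+1) * inner ℝ w w := by
        rw [huvw, map_add, hTw, inner_add_left, inner_add_right, inner_add_right,
          real_inner_smul_right, real_inner_smul_right]
        rw [hcross1, hcross2]
        ring
      have hexp2 : (inner ℝ u u : ℝ) = inner ℝ v0 v0 + inner ℝ w w := by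
        rw [huvw, inner_add_left, inner_add_right, inner_add_right, hcross1, hcross1']
        ring
      rw [hexp1, hexp2]
      nlinarith [mul_le_mul_of_nonneg_right hlam hww]

theorem key_spectral (k : ℕ) (V : Finset α) (hV : V.card = 3*k) (f : Finset α → ℝ)
    (h0 : ∑ x ∈ kslice V k, f x = 0)
    (h1 : ∀ i ∈ V, ∑ x ∈ (kslice V k).filter (fun x => i ∈ x), f x = 0) :
    ∑ x ∈ kslice V k, ∑ y ∈ (kslice V k).filter (fun y => Disjoint x y), f x * f y
      ≥ -(((2*k).choose k : ℝ)/8) * ∑ x ∈ kslice V k, (f x)^2 := by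
  have hmain := main_ind hV k le_rfl (toSlice k V f) (mem_Vle_top _) (perp_Vle1 f h0 h1)
  have hTF : (inner ℝ (toSlice k V f) (Tdis k V (toSlice k V f)) : ℝ)
      = ∑ x ∈ kslice V k, ∑ y ∈ (kslice V k).filter (fun y => Disjoint x y), f x * f y := by
    rw [inner_expand, ← Finset.sum_coe_sort (kslice V k)
      (fun x => ∑ y ∈ (kslice V k).filter (fun y => Disjoint x y), f x * f y)]
    apply Finset.sum_congr rfl
    intro x _
    rw [Tdis_apply, Finset.mul_sum]
    rw [Finset.sum_filter, ← Finset.sum_coe_sort (kslice V k)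
      (fun y => if Disjoint (x:Finset α) y then f (x:Finset α) * f y else 0)]
    apply Finset.sum_congr rfl
    intro y _
    show toSlice k V f x * (if Disjoint (x:Finset α) (y:Finset α) then toSlice k V f y else 0) = _
    split <;> simp [toSlice]
  have hFF : (inner ℝ (toSlice k V f) (toSlice k V f) : ℝ) = ∑ x ∈ kslice V k, (f x)^2 := by
    rw [inner_expand, ← Finset.sum_coe_sort (kslice V k) (fun x => (f x)^2)]
    apply Finset.sum_congr rfl
    intro x _
    show toSlice k V f x * toSlice k V f x = _
    rw [toSlice]
    ring
  rw [← hTF, ← hFF]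
  exact hmain

end Spectral

noncomputable def phiR : WTL → ℝ
  | WTL.W => 1 | WTL.T => 1/2 | WTL.L => 0

noncomputable def tauR : WTL → ℝ
  | WTL.T => 1 | _ => 0

noncomputable def wt3 (a b c : WTL) : ℝ :=
  (if ({a,b,c} : Multiset WTL) = {W,W,W} then (1:ℝ) else 0)
  + (if ({a,b,c} : Multiset WTL) = {L,L,L} then (1:ℝ) else 0)
  + (if ({a,b,c} : Multiset WTL) = {W,W,T} then (1:ℝ) else 0)/2
  + (if ({a,b,c} : Multiset WTL) = {L,L,T} then (1:ℝ) else 0)/2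
  + (if ({a,b,c} : Multiset WTL) = {W,T,T} then (1:ℝ) else 0)/6
  + (if ({a,b,c} : Multiset WTL) = {L,T,T} then (1:ℝ) else 0)/6

lemma wt_identity (a b c : WTL) : wt3 a b c
    = 1 - (phiR a + phiR b + phiR c)
      + (phiR a * phiR b + phiR a * phiR c + phiR b * phiR c)
      - (1/12) * (tauR a * tauR b + tauR a * tauR c + tauR b * tauR c) := by
  cases a <;> cases b <;> cases c <;>
    simp (config := { decide := true }) [wt3, phiR, tauR] <;> norm_num

section Assembly

variable {k : ℕ} {V : Finset α} {g : Finset α → WTL}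

/-- split a sum of ψ ∘ g into the three fibers -/
lemma sum_WTL (S' : Finset (Finset α)) (ψ : WTL → ℝ) :
    ∑ x ∈ S', ψ (g x)
      = ψ W * ((S'.filter (fun x => g x = W)).card : ℝ)
        + ψ T * ((S'.filter (fun x => g x = T)).card : ℝ)
        + ψ L * ((S'.filter (fun x => g x = L)).card : ℝ) := by
  have hpt : ∀ x, ψ (g x) = ψ W * (if g x = W then (1:ℝ) else 0)
      + ψ T * (if g x = T then (1:ℝ) else 0) + ψ L * (if g x = L then (1:ℝ) else 0) := by
    intro x; cases hgx : g x <;> simp [hgx]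
  rw [Finset.sum_congr rfl (fun x _ => hpt x)]
  rw [Finset.sum_add_distrib, Finset.sum_add_distrib, ← Finset.mul_sum, ← Finset.mul_sum,
    ← Finset.mul_sum, Finset.sum_boole, Finset.sum_boole, Finset.sum_boole]

lemma egal_sum (hg : EgalitarianWTL V k g) (ψ : WTL → ℝ) {i j : α} (hi : i ∈ V) (hj : j ∈ V) :
    ∑ x ∈ (kslice V k).filter (fun x => i ∈ x), ψ (g x)
      = ∑ x ∈ (kslice V k).filter (fun x => j ∈ x), ψ (g x) := by
  rw [sum_WTL, sum_WTL]
  simp_rw [Finset.filter_filter]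
  rw [hg W i hi j hj, hg T i hi j hj, hg L i hi j hj]

lemma egal_third (hV : V.card = 3*k) (hg : EgalitarianWTL V k g) (ψ : WTL → ℝ)
    {i : α} (hi : i ∈ V) :
    ∑ x ∈ (kslice V k).filter (fun x => i ∈ x), ψ (g x)
      = (∑ x ∈ kslice V k, ψ (g x))/3 := by
  have hk : 1 ≤ k := by
    by_contra h
    have : V.card = 0 := by omega
    rw [Finset.card_eq_zero] at this
    subst this
    exact absurd hi (Finset.notMem_empty i)
  have hsum : ∑ j ∈ V, ∑ x ∈ (kslice V k).filter (fun x => j ∈ x), ψ (g x)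
      = k • ∑ x ∈ kslice V k, ψ (g x) := sum_elem_filter _
  have hconst : ∑ j ∈ V, ∑ x ∈ (kslice V k).filter (fun x => j ∈ x), ψ (g x)
      = V.card • ∑ x ∈ (kslice V k).filter (fun x => i ∈ x), ψ (g x) := by
    rw [← Finset.sum_const]
    exact Finset.sum_congr rfl (fun j hj => egal_sum hg ψ hj hi)
  rw [hconst, hV] at hsum
  have : ((3*k : ℕ) : ℝ) * ∑ x ∈ (kslice V k).filter (fun x => i ∈ x), ψ (g x)
      = (k : ℝ) * ∑ x ∈ kslice V k, ψ (g x) := by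
    rw [← nsmul_eq_mul, ← nsmul_eq_mul]
    exact hsum
  have hk0 : (k : ℝ) ≠ 0 := Nat.cast_ne_zero.mpr (by omega)
  push_cast at this
  have h3 : 3 * (∑ x ∈ (kslice V k).filter (fun x => i ∈ x), ψ (g x))
      = ∑ x ∈ kslice V k, ψ (g x) := by
    apply mul_left_cancel₀ hk0
    linarith [this]
  linarith [h3]

/-- centered form of the spectral bound -/
lemma key2 (hV : V.card = 3*k) (f : Finset α → ℝ)
    (hf3 : ∀ i ∈ V, ∑ x ∈ (kslice V k).filter (fun x => i ∈ x), f x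
        = (∑ x ∈ kslice V k, f x)/3)
    (hcnt : ∀ i ∈ V, ((((kslice V k).filter (fun x => i ∈ x)).card) : ℝ)
        = (((kslice V k).card) : ℝ)/3) :
    ((kslice V k).card : ℝ) *
      ∑ x ∈ kslice V k, ∑ y ∈ (kslice V k).filter (fun y => Disjoint x y), f x * f y
      ≥ (((2*k).choose k : ℝ)) * (∑ x ∈ kslice V k, f x)^2
        - (((2*k).choose k : ℝ)/8) * (((kslice V k).card : ℝ) *
            (∑ x ∈ kslice V k, (f x)^2) - (∑ x ∈ kslice V k, f x)^2) := by
  have hs0 : 0 < ((kslice V k).card : ℝ) := by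
    rw [card_kslice, hV]
    exact_mod_cast Nat.choose_pos (by omega)
  set s : ℝ := ((kslice V k).card : ℝ) with hsdef
  set Sf : ℝ := ∑ x ∈ kslice V k, f x with hSf
  set μ : ℝ := Sf / s with hμ
  set c : ℝ := (((2*k).choose k : ℕ) : ℝ) with hc
  have hμs : μ * s = Sf := by rw [hμ]; field_simp
  have h0 : ∑ x ∈ kslice V k, (f x - μ) = 0 := by
    rw [Finset.sum_sub_distrib, Finset.sum_const, nsmul_eq_mul]
    rw [← hSf, ← hsdef]
    linarith [hμs]
  have h1 : ∀ i ∈ V, ∑ x ∈ (kslice V k).filter (fun x => i ∈ x), (f x - μ) = 0 := by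
    intro i hi
    rw [Finset.sum_sub_distrib, Finset.sum_const, nsmul_eq_mul, hf3 i hi, hcnt i hi]
    linear_combination (-1/3 : ℝ) * hμs
  have hkey := key_spectral k V hV (fun x => f x - μ) h0 h1
  have hin : ∀ x ∈ kslice V k,
      (((kslice V k).filter (fun y => Disjoint x y)).card : ℝ) = c := by
    intro x hx
    rw [count_disj hV hx]
  have hswapcount : ∀ y ∈ kslice V k,
      (((kslice V k).filter (fun x => Disjoint x y)).card : ℝ) = c := by
    intro y hy
    have heq : (kslice V k).filter (fun x => Disjoint x y)
        = (kslice V k).filter (fun x => Disjoint y x) := by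
      apply Finset.filter_congr
      intro x _
      simp [disjoint_comm]
    rw [heq, count_disj hV hy]
  have e1 : ∑ x ∈ kslice V k, ∑ y ∈ (kslice V k).filter (fun y => Disjoint x y),
      (f x - μ) * (f y - μ)
      = (∑ x ∈ kslice V k, ∑ y ∈ (kslice V k).filter (fun y => Disjoint x y), f x * f y)
        - c * (μ * Sf) - μ * (c * Sf) + s * (c * (μ * μ)) := by
    have hpt : ∀ x y : Finset α, (f x - μ) * (f y - μ)
        = f x * f y - μ * f x - μ * f y + μ * μ := by intros; ring
    simp_rw [hpt]
    have split : ∀ x ∈ kslice V k,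
        ∑ y ∈ (kslice V k).filter (fun y => Disjoint x y),
          (f x * f y - μ * f x - μ * f y + μ * μ)
        = (∑ y ∈ (kslice V k).filter (fun y => Disjoint x y), f x * f y)
          - c * (μ * f x)
          - μ * (∑ y ∈ (kslice V k).filter (fun y => Disjoint x y), f y)
          + c * (μ * μ) := by
      intro x hx
      have hB : ∑ _y ∈ (kslice V k).filter (fun y => Disjoint x y), (μ * f x)
          = c * (μ * f x) := by rw [Finset.sum_const, nsmul_eq_mul, hin x hx]
      have hD : ∑ _y ∈ (kslice V k).filter (fun y => Disjoint x y), (μ * μ)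
          = c * (μ * μ) := by rw [Finset.sum_const, nsmul_eq_mul, hin x hx]
      have hC : ∑ y ∈ (kslice V k).filter (fun y => Disjoint x y), μ * f y
          = μ * ∑ y ∈ (kslice V k).filter (fun y => Disjoint x y), f y :=
        (Finset.mul_sum _ _ _).symm
      rw [Finset.sum_add_distrib, Finset.sum_sub_distrib, Finset.sum_sub_distrib, hB, hC, hD]
    rw [Finset.sum_congr rfl split]
    rw [Finset.sum_add_distrib, Finset.sum_sub_distrib, Finset.sum_sub_distrib]
    have hT2 : ∑ x ∈ kslice V k, c * (μ * f x) = c * (μ * Sf) := by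
      rw [← Finset.mul_sum, ← Finset.mul_sum, ← hSf]
    have hT3 : ∑ x ∈ kslice V k, μ * (∑ y ∈ (kslice V k).filter (fun y => Disjoint x y), f y)
        = μ * (c * Sf) := by
      rw [← Finset.mul_sum]
      congr 1
      rw [sum_pair_swap (fun x y => f y)]
      have hswap : ∀ y ∈ kslice V k,
          ∑ x ∈ (kslice V k).filter (fun x => Disjoint x y), f y = c * f y := by
        intro y hy
        rw [Finset.sum_const, nsmul_eq_mul, hswapcount y hy]
      rw [Finset.sum_congr rfl hswap, ← Finset.mul_sum, ← hSf]
    have hT4 : ∑ _x ∈ kslice V k, c * (μ * μ) = s * (c * (μ * μ)) := by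
      rw [Finset.sum_const, nsmul_eq_mul, ← hsdef]
    rw [hT2, hT3, hT4]
  have e2 : ∑ x ∈ kslice V k, (f x - μ)^2
      = (∑ x ∈ kslice V k, (f x)^2) - 2*μ*Sf + s*(μ*μ) := by
    have hpt2 : ∀ x : Finset α, (f x - μ)^2 = (f x)^2 - 2*μ*f x + μ*μ := by intro; ring
    simp_rw [hpt2]
    rw [Finset.sum_add_distrib, Finset.sum_sub_distrib, Finset.sum_const, nsmul_eq_mul]
    have : ∑ x ∈ kslice V k, 2*μ*f x = 2*μ*Sf := by
      rw [← Finset.mul_sum, ← hSf]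
    rw [this, ← hsdef]
  rw [ge_iff_le] at hkey ⊢
  rw [e1, e2] at hkey
  have hkey2 := mul_le_mul_of_nonneg_left hkey (le_of_lt hs0)
  have hμ2 : s * (s * (μ * μ)) = Sf * Sf := by
    calc s * (s * (μ * μ)) = (μ * s) * (μ * s) := by ring
    _ = Sf * Sf := by rw [hμs]
  have e3 : s * (c * (μ * Sf)) = c * Sf^2 := by
    calc s * (c * (μ * Sf)) = (c*Sf)*(μ*s) := by ring
    _ = c * Sf^2 := by rw [hμs]; ring
  have e4 : s * (μ * (c * Sf)) = c * Sf^2 := by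
    calc s * (μ * (c * Sf)) = (c*Sf)*(μ*s) := by ring
    _ = c * Sf^2 := by rw [hμs]; ring
  have e5 : s * (s * (c * (μ * μ))) = c * Sf^2 := by
    calc s * (s * (c * (μ * μ))) = c * (s*(s*(μ*μ))) := by ring
    _ = c * Sf^2 := by rw [hμ2]; ring
  have e6 : s * (2*μ*Sf) = 2*Sf^2 := by
    calc s * (2*μ*Sf) = 2*Sf*(μ*s) := by ring
    _ = 2*Sf^2 := by rw [hμs]; ring
  have e7 : s * (s * (μ*μ)) = Sf^2 := by rw [hμ2]; ring
  nlinarith [hkey2, e3, e4, e5, e6, e7]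

end Assembly
section Assembly2

variable {k : ℕ} {V : Finset α} {g : Finset α → WTL}

lemma final_arith (s c nW nT nL Sp Qp Dp Dt Ev : ℝ)
    (hs : 0 < s) (hc : 0 < c)
    (hsum : nW + nT + nL = s) (hnT : nT ≤ s) (hnT0 : 0 ≤ nT)
    (hSp : Sp = nW + nT/2) (hQp : Qp = nW + nT/4)
    (hkey : s*Dp ≥ c*Sp^2 - c/8*(s*Qp - Sp^2))
    (hDt : Dt ≤ c*nT)
    (hE : Ev * (s*c) = s*c - 3*c*Sp + 3*Dp - Dt/4) :
    ((1 - nT/s)*(5 - 3*(nT/s)) + 27*((nW - nL)/s)^2)/32 ≤ Ev := by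
  have hsc : (0:ℝ) < s * c := mul_pos hs hc
  have hEv : Ev = (s*c - 3*c*Sp + 3*Dp - Dt/4)/(s*c) := by
    rw [eq_div_iff (ne_of_gt hsc)]
    exact hE
  have hLHS : ((1 - nT/s)*(5 - 3*(nT/s)) + 27*((nW - nL)/s)^2)/32
      = ((s - nT)*(5*s - 3*nT) + 27*(nW - nL)^2)/(32*s^2) := by
    field_simp
    try ring
  rw [hEv, hLHS, div_le_div_iff₀ (by positivity) hsc]
  have h1 : 0 ≤ 32*s*(3*(s*Dp - (c*Sp^2 - c/8*(s*Qp - Sp^2)))) := by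
    have : 0 ≤ s*Dp - (c*Sp^2 - c/8*(s*Qp - Sp^2)) := by linarith [hkey]
    positivity
  have h2 : 0 ≤ 8*s^2*(c*nT - Dt) := by
    have : 0 ≤ c*nT - Dt := by linarith [hDt]
    positivity
  have h3 : 0 ≤ c*(s*(nT*(s - nT))) := by
    have h4 : 0 ≤ nT*(s-nT) := mul_nonneg hnT0 (by linarith)
    positivity
  subst hSp
  subst hQp
  have hnL : nL = s - nW - nT := by linarith
  subst hnL
  nlinarith [h1, h2, h3]

lemma trsum1 (hV : V.card = 3*k) (H : Finset α → ℝ) :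
    ∑ q ∈ triples V k k k, H q.1
      = (((2*k).choose k : ℕ) : ℝ) * ∑ x ∈ kslice V k, H x := by
  rw [sum_tr12 hV (fun x _ => H x)]
  rw [Finset.mul_sum]
  apply Finset.sum_congr rfl
  intro x hx
  rw [Finset.sum_const, nsmul_eq_mul, count_disj hV hx]

lemma inner_disj_sum (hV : V.card = 3*k) (H : Finset α → ℝ) :
    ∑ x ∈ kslice V k, ∑ y ∈ (kslice V k).filter (fun y => Disjoint x y), H y
      = (((2*k).choose k : ℕ) : ℝ) * ∑ x ∈ kslice V k, H x := by
  rw [sum_pair_swap (fun x y => H y), Finset.mul_sum]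
  apply Finset.sum_congr rfl
  intro y hy
  have heq : (kslice V k).filter (fun x => Disjoint x y)
      = (kslice V k).filter (fun x => Disjoint y x) := by
    apply Finset.filter_congr
    intro x _
    simp [disjoint_comm]
  rw [Finset.sum_const, heq, nsmul_eq_mul, count_disj hV hy]

lemma trsum2 (hV : V.card = 3*k) (H : Finset α → ℝ) :
    ∑ q ∈ triples V k k k, H q.2.1
      = (((2*k).choose k : ℕ) : ℝ) * ∑ x ∈ kslice V k, H x := by
  rw [sum_tr12 hV (fun _ y => H y)]
  exact inner_disj_sum hV H

lemma trsum3 (hV : V.card = 3*k) (H : Finset α → ℝ) :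
    ∑ q ∈ triples V k k k, H q.2.2
      = (((2*k).choose k : ℕ) : ℝ) * ∑ x ∈ kslice V k, H x := by
  rw [sum_tr13 hV (fun _ y => H y)]
  exact inner_disj_sum hV H

lemma trcard (hV : V.card = 3*k) :
    ((triples V k k k).card : ℝ)
      = ((kslice V k).card : ℝ) * (((2*k).choose k : ℕ) : ℝ) := by
  have h := trsum1 hV (fun _ => (1:ℝ))
  rw [Finset.sum_const, Finset.sum_const, nsmul_eq_mul, nsmul_eq_mul] at h
  rw [mul_one] at h
  rw [h]
  ring

/-- trivial bound for the T-pair sum -/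
lemma Dtau_bound (hV : V.card = 3*k) :
    ∑ x ∈ kslice V k, ∑ y ∈ (kslice V k).filter (fun y => Disjoint x y),
        tauR (g x) * tauR (g y)
      ≤ (((2*k).choose k : ℕ) : ℝ) * ∑ x ∈ kslice V k, tauR (g x) := by
  have htau01 : ∀ X : WTL, 0 ≤ tauR X ∧ tauR X ≤ 1 := by
    intro X; cases X <;> simp [tauR]
  rw [Finset.mul_sum]
  apply Finset.sum_le_sum
  intro x hx
  calc ∑ y ∈ (kslice V k).filter (fun y => Disjoint x y), tauR (g x) * tauR (g y)
      ≤ ∑ y ∈ (kslice V k).filter (fun y => Disjoint x y), tauR (g x) := by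
        apply Finset.sum_le_sum
        intro y _
        calc tauR (g x) * tauR (g y) ≤ tauR (g x) * 1 :=
          mul_le_mul_of_nonneg_left (htau01 (g y)).2 (htau01 (g x)).1
        _ = tauR (g x) := mul_one _
    _ = (((2*k).choose k : ℕ) : ℝ) * tauR (g x) := by
        rw [Finset.sum_const, nsmul_eq_mul, count_disj hV hx]

end Assembly2

/-- for an egalitarian `g : S → {W,T,L}` on the `k`-slice of a `3k`-set,
with `p_T = P(g=T)`, bias `b = P(g=W) − P(g=L)`, multiset probabilities `p_{XYZ}`
over a uniform ordered partition `(x₁,x₂,x₃)` into three `k`-sets, and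
`E = p_{WWW} + p_{LLL} + p_{WWT}/2 + p_{LLT}/2 + p_{WTT}/6 + p_{LTT}/6`,
we have `E ≥ ((1−p_T)(5−3p_T) + 27b²)/32`. -/
theorem stmt11 (k : ℕ) (V : Finset α) (hV : V.card = 3 * k)
    (g : Finset α → WTL) (hg : EgalitarianWTL V k g) :
    let S := kslice V k
    let Tr := triples V k k k
    let pX : WTL → ℚ := fun X => ((S.filter (fun x => g x = X)).card : ℚ) / S.card
    let pm : Multiset WTL → ℚ := fun m =>
      ((Tr.filter (fun q => ({g q.1, g q.2.1, g q.2.2} : Multiset WTL) = m)).card : ℚ)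
        / Tr.card
    let b : ℚ := pX W - pX L
    let E : ℚ := pm {W, W, W} + pm {L, L, L} + pm {W, W, T} / 2 + pm {L, L, T} / 2
      + pm {W, T, T} / 6 + pm {L, T, T} / 6
    E ≥ ((1 - pX T) * (5 - 3 * pX T) + 27 * b ^ 2) / 32 := by
  intro S Tr pX pm b E
  have hV' : V.card = 3*k := hV
  have hs0 : (0:ℝ) < ((kslice V k).card : ℝ) := by
    rw [card_kslice, hV']
    exact_mod_cast Nat.choose_pos (by omega)
  have hc0 : (0:ℝ) < (((2*k).choose k : ℕ) : ℝ) := by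
    exact_mod_cast Nat.choose_pos (by omega)
  -- abbreviations (as plain definitions for readability)
  have hEdef : E = pm {W, W, W} + pm {L, L, L} + pm {W, W, T} / 2 + pm {L, L, T} / 2
      + pm {W, T, T} / 6 + pm {L, T, T} / 6 := rfl
  have hpm : ∀ m, pm m
      = (((triples V k k k).filter
          (fun q => ({g q.1, g q.2.1, g q.2.2} : Multiset WTL) = m)).card : ℚ)
        / ((triples V k k k).card : ℚ) := fun _ => rfl
  have hpX : ∀ X, pX X = (((kslice V k).filter (fun x => g x = X)).card : ℚ)
      / ((kslice V k).card : ℚ) := fun _ => rfl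
  have hbdef : b = pX W - pX L := rfl
  -- real quantities
  have hsum : (((kslice V k).filter (fun x => g x = W)).card : ℝ)
      + (((kslice V k).filter (fun x => g x = T)).card : ℝ)
      + (((kslice V k).filter (fun x => g x = L)).card : ℝ)
      = ((kslice V k).card : ℝ) := by
    have h := sum_WTL (g := g) (kslice V k) (fun _ => (1:ℝ))
    simp only [one_mul, Finset.sum_const, nsmul_eq_mul, mul_one] at h
    linarith [h]
  have hSv : (∑ x ∈ kslice V k, phiR (g x))
      = (((kslice V k).filter (fun x => g x = W)).card : ℝ)
        + (((kslice V k).filter (fun x => g x = T)).card : ℝ)/2 := by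
    rw [sum_WTL (g := g) (kslice V k) phiR]
    simp [phiR]
    ring
  have hQv : (∑ x ∈ kslice V k, (phiR (g x))^2)
      = (((kslice V k).filter (fun x => g x = W)).card : ℝ)
        + (((kslice V k).filter (fun x => g x = T)).card : ℝ)/4 := by
    rw [sum_WTL (g := g) (kslice V k) (fun X => (phiR X)^2)]
    simp [phiR]
    ring
  have hTv : (∑ x ∈ kslice V k, tauR (g x))
      = (((kslice V k).filter (fun x => g x = T)).card : ℝ) := by
    rw [sum_WTL (g := g) (kslice V k) tauR]
    simp [tauR]
  -- egalitarian consequences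
  have hf3 : ∀ i ∈ V, ∑ x ∈ (kslice V k).filter (fun x => i ∈ x), phiR (g x)
      = (∑ x ∈ kslice V k, phiR (g x))/3 := fun i hi => egal_third hV' hg phiR hi
  have hcnt : ∀ i ∈ V, ((((kslice V k).filter (fun x => i ∈ x)).card) : ℝ)
      = (((kslice V k).card) : ℝ)/3 := by
    intro i hi
    have h := egal_third hV' hg (fun _ => (1:ℝ)) hi
    simp only [Finset.sum_const, nsmul_eq_mul, mul_one] at h
    exact h
  have hkey2 := key2 hV' (fun x => phiR (g x)) hf3 hcnt
  -- the trivial bound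
  have hDt := Dtau_bound (g := g) hV'
  rw [hTv] at hDt
  -- the E identity
  have hwt2 : ∑ q ∈ triples V k k k, wt3 (g q.1) (g q.2.1) (g q.2.2)
      = ((kslice V k).card : ℝ) * (((2*k).choose k : ℕ) : ℝ)
        - 3 * (((2*k).choose k : ℕ) : ℝ) * (∑ x ∈ kslice V k, phiR (g x))
        + 3 * (∑ x ∈ kslice V k, ∑ y ∈ (kslice V k).filter (fun y => Disjoint x y),
            phiR (g x) * phiR (g y))
        - (∑ x ∈ kslice V k, ∑ y ∈ (kslice V k).filter (fun y => Disjoint x y),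
            tauR (g x) * tauR (g y))/4 := by
    rw [Finset.sum_congr rfl (fun q _ => wt_identity (g q.1) (g q.2.1) (g q.2.2))]
    simp only [Finset.sum_add_distrib, Finset.sum_sub_distrib]
    rw [← Finset.mul_sum]
    rw [Finset.sum_add_distrib, Finset.sum_add_distrib]
    rw [trsum1 hV' (fun x => phiR (g x)), trsum2 hV' (fun x => phiR (g x)),
      trsum3 hV' (fun x => phiR (g x))]
    rw [sum_tr12 hV' (fun x y => phiR (g x) * phiR (g y)),
      sum_tr13 hV' (fun x y => phiR (g x) * phiR (g y)),
      sum_tr23 hV' (fun x y => phiR (g x) * phiR (g y))]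
    rw [sum_tr12 hV' (fun x y => tauR (g x) * tauR (g y)),
      sum_tr13 hV' (fun x y => tauR (g x) * tauR (g y)),
      sum_tr23 hV' (fun x y => tauR (g x) * tauR (g y))]
    rw [Finset.sum_const, nsmul_eq_mul, mul_one]
    rw [trcard hV']
    ring
  have hwt1 : ∑ q ∈ triples V k k k, wt3 (g q.1) (g q.2.1) (g q.2.2)
      = (((triples V k k k).filter
            (fun q => ({g q.1, g q.2.1, g q.2.2} : Multiset WTL) = {W,W,W})).card : ℝ)
        + (((triples V k k k).filter
            (fun q => ({g q.1, g q.2.1, g q.2.2} : Multiset WTL) = {L,L,L})).card : ℝ)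
        + (((triples V k k k).filter
            (fun q => ({g q.1, g q.2.1, g q.2.2} : Multiset WTL) = {W,W,T})).card : ℝ)/2
        + (((triples V k k k).filter
            (fun q => ({g q.1, g q.2.1, g q.2.2} : Multiset WTL) = {L,L,T})).card : ℝ)/2
        + (((triples V k k k).filter
            (fun q => ({g q.1, g q.2.1, g q.2.2} : Multiset WTL) = {W,T,T})).card : ℝ)/6
        + (((triples V k k k).filter
            (fun q => ({g q.1, g q.2.1, g q.2.2} : Multiset WTL) = {L,T,T})).card : ℝ)/6 := by
    simp only [wt3, Finset.sum_add_distrib, ← Finset.sum_div, Finset.sum_boole]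
  have hNval := trcard hV'
  have hN0 : (0:ℝ) < ((triples V k k k).card : ℝ) := by
    rw [hNval]; positivity
  have hEcast : ((E : ℚ) : ℝ)
      = (∑ q ∈ triples V k k k, wt3 (g q.1) (g q.2.1) (g q.2.2))
        / ((triples V k k k).card : ℝ) := by
    rw [hwt1, hEdef]
    simp only [hpm]
    push_cast
    ring
  have hEprod : ((E : ℚ) : ℝ) * (((kslice V k).card : ℝ) * (((2*k).choose k : ℕ) : ℝ))
      = ((kslice V k).card : ℝ) * (((2*k).choose k : ℕ) : ℝ)
        - 3 * (((2*k).choose k : ℕ) : ℝ) * (∑ x ∈ kslice V k, phiR (g x))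
        + 3 * (∑ x ∈ kslice V k, ∑ y ∈ (kslice V k).filter (fun y => Disjoint x y),
            phiR (g x) * phiR (g y))
        - (∑ x ∈ kslice V k, ∑ y ∈ (kslice V k).filter (fun y => Disjoint x y),
            tauR (g x) * tauR (g y))/4 := by
    rw [hEcast, ← hNval, div_mul_cancel₀ _ (ne_of_gt hN0), hwt2, hNval]
  -- final arithmetic
  have hnTle : (((kslice V k).filter (fun x => g x = T)).card : ℝ)
      ≤ ((kslice V k).card : ℝ) := by
    exact_mod_cast Finset.card_filter_le _ _
  have harith := final_arith ((kslice V k).card : ℝ) (((2*k).choose k : ℕ) : ℝ)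
    (((kslice V k).filter (fun x => g x = W)).card : ℝ)
    (((kslice V k).filter (fun x => g x = T)).card : ℝ)
    (((kslice V k).filter (fun x => g x = L)).card : ℝ)
    (∑ x ∈ kslice V k, phiR (g x)) (∑ x ∈ kslice V k, (phiR (g x))^2)
    (∑ x ∈ kslice V k, ∑ y ∈ (kslice V k).filter (fun y => Disjoint x y),
        phiR (g x) * phiR (g y))
    (∑ x ∈ kslice V k, ∑ y ∈ (kslice V k).filter (fun y => Disjoint x y),
        tauR (g x) * tauR (g y))
    ((E : ℚ) : ℝ)
    hs0 hc0 hsum hnTle (Nat.cast_nonneg _) hSv hQv hkey2 hDt hEprod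
  rw [ge_iff_le, ← Rat.cast_le (K := ℝ)]
  refine le_trans (le_of_eq ?_) harith
  rw [hbdef]
  simp only [hpX]
  push_cast
  ring
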